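/- Let R be a commutative ring, S, N, D natural numbers, a, b : Fin S → R, a₀ ∈ R, and j ∈ Fin S. Define the 2S×2S matrix M'' over R (rows and columns indexed by Fin S ⊕ Fin S) by: column inr j is given by M''(inl i, inr j) = g_N(a₀) for all i ∈ Fin S and M''(inr i, inr j) = 0 for all i ∈ Fin S; and for the remaining columns: M''(inl i, inl i) = −g_N(aᵢ), M''(inl i, inr i) = −aᵢᴺ·g_D(bᵢ) (when i ≠ j), M''(inr i, inl i) = 1 − bᵢ, M''(inr i, inr i) = aᵢ − 1 (when i ≠ j), all other entries 0. Then det M'' = −g_N(a₀)·(1 − b_j)·∏_{i ≠ j} (1 − aᵢᴺ·bᵢᴰ). (This is the Type III.j minor of the Alexander matrix of the tst link [Φ^μ(n(τ), d(τ), M)] with M odd, in which the column of b_j is replaced by the column of a₀.) -/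

import Mathlib

/-- The geometric sum `g_m(x) = ∑_{k=0}^{m-1} xᵏ`, the group-ring analogue of `(1-xᵐ)/(1-x)`. -/
def geomSum {R : Type*} [CommRing R] (m : ℕ) (x : R) : R := ∑ k ∈ Finset.range m, x ^ k

lemma map_geomSum {R S : Type*} [CommRing R] [CommRing S] (f : R →+* S) (m : ℕ) (x : R) :
    f (geomSum m x) = geomSum m (f x) := by
  simp [geomSum, map_sum, map_pow]

open Matrix Finset

/-- The generic Type III.j matrix. -/
def genMat {R : Type*} [CommRing R] (S N D : ℕ) (a b : Fin S → R) (a₀ : R) (j : Fin S) :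
    Matrix (Fin S ⊕ Fin S) (Fin S ⊕ Fin S) R :=
  Matrix.fromBlocks
    (Matrix.diagonal fun i => -(geomSum N (a i)))
    (Matrix.of fun i c => if c = j then geomSum N a₀ else
      if c = i then -((a i) ^ N * geomSum D (b i)) else 0)
    (Matrix.diagonal fun i => 1 - b i)
    (Matrix.of fun i c => if c = j then 0 else if c = i then a i - 1 else 0)

lemma genMat_det_field {F : Type*} [Field F] (S N D : ℕ) (a b : Fin S → F) (a₀ : F)
    (j : Fin S) (hg : ∀ i, geomSum N (a i) ≠ 0) (hb : 1 - b j ≠ 0) :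
    (genMat S N D a b a₀ j).det = -(geomSum N a₀ * (1 - b j) *
      ∏ i ∈ Finset.univ.erase j, (1 - (a i) ^ N * (b i) ^ D)) := by
  classical
  set g : Fin S → F := fun i => geomSum N (a i) with hgdef
  have hg' : ∀ i, g i ≠ 0 := hg
  haveI : Invertible (Matrix.diagonal fun i => -(g i)) :=
    Matrix.invertibleOfIsUnitDet _ (by
      rw [Matrix.det_diagonal]
      exact (Finset.prod_ne_zero_iff.mpr fun i _ => neg_ne_zero.mpr (hg' i)).isUnit)
  have hA : ⅟(Matrix.diagonal fun i => -(g i)) = Matrix.diagonal fun i => (-(g i))⁻¹ := by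
    apply invOf_eq_right_inv
    rw [Matrix.diagonal_mul_diagonal]
    convert Matrix.diagonal_one with i
    exact mul_inv_cancel₀ (neg_ne_zero.mpr (hg' i))
  rw [genMat, Matrix.det_fromBlocks₁₁, hA]
  set d : Fin S → F := fun i => if i = j then (1 - b j) * geomSum N a₀ / g j
    else ((a i) ^ N * (b i) ^ D - 1) / g i with hd
  have hrow : ((Matrix.of fun i c => if c = j then (0:F) else if c = i then a i - 1 else 0)
      - Matrix.diagonal (fun i => 1 - b i) * (Matrix.diagonal fun i => (-(g i))⁻¹) *
        (Matrix.of fun i c => if c = j then geomSum N a₀ else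
          if c = i then -((a i) ^ N * geomSum D (b i)) else 0)).det
      = (Matrix.diagonal d).det := by
    apply Matrix.det_eq_of_forall_row_eq_smul_add_const
      (fun i => if i = j then 0 else (1 - b i) * g j / (g i * (1 - b j))) j (by simp)
    intro i k
    rw [Matrix.diagonal_mul_diagonal]
    simp only [Matrix.sub_apply, Matrix.diagonal_mul, Matrix.of_apply, Matrix.diagonal_apply, hd]
    rcases eq_or_ne k j with hkj | hkj
    · subst hkj
      rcases eq_or_ne i k with hik | hik
      · subst hik
        simp only [if_pos rfl, if_true]
        field_simp
        ring
      · simp only [if_pos rfl, if_true, if_neg hik]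
        rw [div_mul_div_comm]
        field_simp [hg' i, hg' k, hb]
        ring
    · rcases eq_or_ne i k with hik | hik
      · subst hik
        have e1 : geomSum N (a i) * (a i - 1) = (a i) ^ N - 1 := geom_sum_mul (a i) N
        have e2 : geomSum D (b i) * (b i - 1) = (b i) ^ D - 1 := geom_sum_mul (b i) D
        have key : (a i - 1) * g i - (1 - b i) * ((a i) ^ N * geomSum D (b i))
            = (a i) ^ N * (b i) ^ D - 1 := by
          linear_combination e1 + (a i) ^ N * e2
        simp only [if_pos rfl, if_true, if_neg hkj, if_neg (Ne.symm hkj)]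
        rw [mul_zero, add_zero]
        field_simp [hg' i]
        linear_combination key
      · simp only [if_neg hkj, if_neg (Ne.symm hik), if_neg hik, if_neg (Ne.symm hkj)]
        ring
  rw [hrow]
  rw [Matrix.det_diagonal, Matrix.det_diagonal, ← Finset.prod_mul_distrib]
  rw [← Finset.mul_prod_erase Finset.univ _ (Finset.mem_univ j)]
  have hj : -g j * d j = -((1 - b j) * geomSum N a₀) := by
    rw [hd]; simp only [if_pos rfl, if_true]
    field_simp [hg' j]
  have hrest : ∀ i ∈ Finset.univ.erase j, -g i * d i = 1 - (a i) ^ N * (b i) ^ D := by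
    intro i hi
    have hij : i ≠ j := (Finset.mem_erase.mp hi).1
    rw [hd]; simp only [if_neg hij]
    field_simp [hg' i]
    ring
  rw [hj, Finset.prod_congr rfl hrest]
  ring

lemma genMat_map {R S' : Type*} [CommRing R] [CommRing S'] (f : R →+* S') (S N D : ℕ)
    (a b : Fin S → R) (a₀ : R) (j : Fin S) :
    (genMat S N D a b a₀ j).map f = genMat S N D (f ∘ a) (f ∘ b) (f a₀) j := by
  ext i k
  cases i <;> cases k <;>
    simp [genMat, Matrix.map_apply, Matrix.diagonal_apply, Function.comp,
      apply_ite f, map_geomSum]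

lemma genMat_det {R : Type*} [CommRing R] (S N D : ℕ) (hN : N ≠ 0)
    (a b : Fin S → R) (a₀ : R) (j : Fin S) :
    (genMat S N D a b a₀ j).det = -(geomSum N a₀ * (1 - b j) *
      ∏ i ∈ Finset.univ.erase j, (1 - (a i) ^ N * (b i) ^ D)) := by
  classical
  let R₀ := MvPolynomial ((Fin S ⊕ Fin S) ⊕ Unit) ℤ
  let pa : Fin S → R₀ := fun i => MvPolynomial.X (Sum.inl (Sum.inl i))
  let pb : Fin S → R₀ := fun i => MvPolynomial.X (Sum.inl (Sum.inr i))
  let pa₀ : R₀ := MvPolynomial.X (Sum.inr ())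
  let F := FractionRing R₀
  let ψ : R₀ →+* F := algebraMap R₀ F
  have hψ : Function.Injective ψ := IsFractionRing.injective R₀ F
  have hzero : ∀ x : R₀, ψ x = 0 → x = 0 := by
    intro x hx
    exact hψ (by simpa using hx)
  have hXa : ∀ i, geomSum N ((ψ ∘ pa) i) ≠ 0 := by
    intro i h
    have h' : geomSum N (pa i) = 0 := hzero _ (by rw [map_geomSum]; exact h)
    have := congrArg (MvPolynomial.eval (fun _ => (0:ℤ))) h'
    rw [map_geomSum] at this
    simp [pa, geomSum, hN] at this
  have hXb : 1 - (ψ ∘ pb) j ≠ 0 := by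
    intro h
    have h' : (1 : R₀) - pb j = 0 := hzero _ (by rw [map_sub, RingHom.map_one]; exact h)
    have := congrArg (MvPolynomial.eval (fun _ => (0:ℤ))) h'
    simp [pb] at this
  have hgen : (genMat S N D pa pb pa₀ j).det = -(geomSum N pa₀ * (1 - pb j) *
      ∏ i ∈ Finset.univ.erase j, (1 - (pa i) ^ N * (pb i) ^ D)) := by
    apply hψ
    rw [RingHom.map_det, RingHom.mapMatrix_apply, genMat_map, genMat_det_field S N D _ _ _ _ hXa hXb]
    simp only [map_neg, _root_.map_mul, map_sub, _root_.map_one, map_prod, map_pow,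
      map_geomSum, Function.comp]
  let v : (Fin S ⊕ Fin S) ⊕ Unit → R := Sum.elim (Sum.elim a b) (fun _ => a₀)
  let φ : R₀ →+* R := MvPolynomial.eval₂Hom (Int.castRingHom R) v
  have h1' : ∀ i, φ (pa i) = a i := fun i => MvPolynomial.eval₂Hom_X' _ _ _
  have h2' : ∀ i, φ (pb i) = b i := fun i => MvPolynomial.eval₂Hom_X' _ _ _
  have h3 : φ pa₀ = a₀ := MvPolynomial.eval₂Hom_X' _ _ _
  have h1 : φ ∘ pa = a := funext h1'
  have h2 : φ ∘ pb = b := funext h2'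
  have : (genMat S N D a b a₀ j).det = φ (genMat S N D pa pb pa₀ j).det := by
    rw [RingHom.map_det, RingHom.mapMatrix_apply, genMat_map, h1, h2, h3]
  rw [this, hgen]
  simp only [map_neg, _root_.map_mul, map_sub, _root_.map_one, map_prod, map_pow,
    map_geomSum, h1', h2', h3]

open Matrix in
theorem typeIII_minor_odd {R : Type*} [CommRing R] (S N D : ℕ)
    (a b : Fin S → R) (a₀ : R) (j : Fin S)
    (M'' : Matrix (Fin S ⊕ Fin S) (Fin S ⊕ Fin S) R)
    (h₁ : ∀ i c : Fin S, M'' (Sum.inl i) (Sum.inl c) =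
      if c = i then -(geomSum N (a i)) else 0)
    (h₂ : ∀ i c : Fin S, M'' (Sum.inl i) (Sum.inr c) =
      if c = j then geomSum N a₀ else if c = i then -((a i) ^ N * geomSum D (b i)) else 0)
    (h₃ : ∀ i c : Fin S, M'' (Sum.inr i) (Sum.inl c) =
      if c = i then 1 - b i else 0)
    (h₄ : ∀ i c : Fin S, M'' (Sum.inr i) (Sum.inr c) =
      if c = j then 0 else if c = i then a i - 1 else 0) :
    M''.det = -(geomSum N a₀ * (1 - b j) *
      ∏ i ∈ Finset.univ.erase j, (1 - (a i) ^ N * (b i) ^ D)) := by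
  rcases Nat.eq_zero_or_pos N with hN | hN
  · subst hN
    have hz : ∀ i, M'' i (Sum.inr j) = 0 := by
      intro i
      cases i with
      | inl i => rw [h₂]; simp [geomSum]
      | inr i => rw [h₄]; simp
    rw [Matrix.det_eq_zero_of_column_eq_zero _ hz]
    simp [geomSum]
  · have hM : M'' = genMat S N D a b a₀ j := by
      ext i k
      cases i with
      | inl i =>
        cases k with
        | inl k =>
          rw [h₁]
          simp only [genMat, Matrix.fromBlocks_apply₁₁, Matrix.diagonal_apply]
          exact if_congr eq_comm rfl rfl
        | inr k =>
          rw [h₂]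
          simp only [genMat, Matrix.fromBlocks_apply₁₂, Matrix.of_apply]
      | inr i =>
        cases k with
        | inl k =>
          rw [h₃]
          simp only [genMat, Matrix.fromBlocks_apply₂₁, Matrix.diagonal_apply]
          exact if_congr eq_comm rfl rfl
        | inr k =>
          rw [h₄]
          simp only [genMat, Matrix.fromBlocks_apply₂₂, Matrix.of_apply]
    rw [hM, genMat_det S N D (Nat.pos_iff_ne_zero.mp hN)]
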